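/- Let A be a C*-algebra, let p ∈ A be a projection, and let x ∈ A satisfy x·p = x and ‖x*·x − p‖ < 1. Then there exists a partial isometry v ∈ A with v*·v = p and ‖v − x‖ ≤ 1 − (1 − ‖x*·x − p‖)^(1/2) ≤ ‖x*·x − p‖. (One may take v = x·(x*·x)^(−1/2), the inverse square root computed by continuous functional calculus inside the corner p·A·p.) -/

import Mathlib

set_option maxHeartbeats 1000000 in
/-- Let `A` be a C*-algebra, `p ∈ A` a projection, and `x ∈ A` with
`x·p = x` and `‖x*·x − p‖ < 1`.  Then there is a partial isometry `v ∈ A` with `v*·v = p`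
and `‖v − x‖ ≤ 1 − (1 − ‖x*·x − p‖)^(1/2) ≤ ‖x*·x − p‖`. -/
theorem stmt_0 {A : Type*} [NonUnitalNormedRing A] [StarRing A] [CStarRing A]
    [CompleteSpace A] [NormedSpace ℂ A] [IsScalarTower ℂ A A] [SMulCommClass ℂ A A]
    [StarModule ℂ A]
    (p x : A) (hp_sa : IsSelfAdjoint p) (hp_idem : p * p = p)
    (hxp : x * p = x) (hx : ‖star x * x - p‖ < 1) :
    ∃ v : A, star v * v = p ∧
      ‖v - x‖ ≤ 1 - Real.sqrt (1 - ‖star x * x - p‖) ∧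
      1 - Real.sqrt (1 - ‖star x * x - p‖) ≤ ‖star x * x - p‖ := by
  letI : NonUnitalCStarAlgebra A := {}
  set d : ℝ := ‖star x * x - p‖ with hd_def
  have hd0 : 0 ≤ d := norm_nonneg _
  have hd1 : d < 1 := hx
  have hsq : Real.sqrt (1 - d) * Real.sqrt (1 - d) = 1 - d :=
    Real.mul_self_sqrt (by linarith)
  have hreal : 1 - Real.sqrt (1 - d) ≤ d := by
    nlinarith [Real.sqrt_nonneg (1 - d)]
  have hc0 : (0 : ℝ) ≤ 1 - Real.sqrt (1 - d) := by
    nlinarith [Real.sqrt_nonneg (1 - d)]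
  -- pass to the unitization
  set X : Unitization ℂ A := (x : Unitization ℂ A) with hX_def
  set P : Unitization ℂ A := (p : Unitization ℂ A) with hP_def
  have hT : ((star x * x : A) : Unitization ℂ A) = star X * X := by
    rw [Unitization.inr_mul, Unitization.inr_star]
  set T : Unitization ℂ A := star X * X with hT_def
  set Y : Unitization ℂ A := 1 + (T - P) with hY_def
  set Q : Unitization ℂ A := 1 - P with hQ_def
  -- basic algebraic facts about `p`, `x` in `A`
  have hpx : p * star x = star x := by
    conv_rhs => rw [← hxp, star_mul, hp_sa.star_eq]
  have htp : star x * x * p = star x * x := by rw [mul_assoc, hxp]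
  have hpt : p * (star x * x) = star x * x := by rw [← mul_assoc, hpx]
  -- transferred to the unitization
  have hPsa : IsSelfAdjoint P := hp_sa.inr ℂ
  have hPP : P * P = P := by
    rw [hP_def, ← Unitization.inr_mul, hp_idem]
  have hTP : T * P = T := by
    rw [← hT, hP_def, ← Unitization.inr_mul, htp]
  have hPT : P * T = T := by
    rw [← hT, hP_def, ← Unitization.inr_mul, hpt]
  have hY1 : Y - 1 = T - P := by rw [hY_def]; abel
  have hQY : Q * (Y - 1) = 0 := by
    rw [hY1, hQ_def, sub_mul, one_mul, mul_sub, hPT, hPP]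
    exact sub_self _
  have hYQ : (Y - 1) * Q = 0 := by
    rw [hY1, hQ_def, mul_sub, mul_one, sub_mul, hTP, hPP]
    exact sub_self _
  have hYnorm : ‖Y - 1‖ = d := by
    rw [hY1, ← hT, hP_def, ← Unitization.inr_sub, Unitization.norm_inr]
  have hYsa : IsSelfAdjoint Y := by
    rw [isSelfAdjoint_iff, hY_def, star_add, star_one, star_sub, hPsa.star_eq, hT_def,
      star_mul, star_star]
  -- spectrum of `Y`
  have hspec : ∀ r ∈ spectrum ℝ Y, r ∈ Set.Icc (1 - d) (1 + d) := by
    intro r hr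
    have h1 : r - 1 ∈ spectrum ℝ (Y - algebraMap ℝ (Unitization ℂ A) 1) := by
      rw [← spectrum.sub_singleton_eq]
      exact Set.sub_mem_sub hr rfl
    have h2 : ‖r - (1 : ℝ)‖ ≤ ‖Y - algebraMap ℝ (Unitization ℂ A) 1‖ :=
      spectrum.norm_le_norm_of_mem h1
    rw [map_one, hYnorm, Real.norm_eq_abs] at h2
    rw [abs_le] at h2
    exact ⟨by linarith [h2.1], by linarith [h2.2]⟩
  have hpos : ∀ r ∈ spectrum ℝ Y, 0 < r := fun r hr => by
    have := (hspec r hr).1; linarith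
  have hsne : ∀ r ∈ spectrum ℝ Y, Real.sqrt r ≠ 0 := fun r hr =>
    (Real.sqrt_pos.mpr (hpos r hr)).ne'
  -- the functions
  set f : ℝ → ℝ := fun r => (Real.sqrt r)⁻¹ with hf_def
  set h : ℝ → ℝ := fun r => -(Real.sqrt r * (Real.sqrt r + 1))⁻¹ with hh_def
  have hfc : ContinuousOn f (spectrum ℝ Y) :=
    ContinuousOn.inv₀ Real.continuous_sqrt.continuousOn hsne
  have hhc : ContinuousOn h (spectrum ℝ Y) := by
    apply ContinuousOn.neg
    apply ContinuousOn.inv₀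
    · exact (Real.continuous_sqrt.mul (Real.continuous_sqrt.add continuous_const)).continuousOn
    · intro r hr
      have h1 := Real.sqrt_nonneg r
      have h2 := hsne r hr
      positivity
  have hf1c : ContinuousOn (fun r => f r - 1) (spectrum ℝ Y) := hfc.sub continuousOn_const
  have hidc : ContinuousOn (fun r : ℝ => r) (spectrum ℝ Y) := continuousOn_id
  set Z : Unitization ℂ A := cfc f Y with hZ_def
  have hZsa : IsSelfAdjoint Z := cfc_predicate _ _
  -- pointwise identities
  have hsq_inv : ∀ r ∈ spectrum ℝ Y, f r * f r * r = 1 := by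
    intro r hr
    have hs := Real.mul_self_sqrt (hpos r hr).le
    rw [hf_def, ← mul_inv, hs, inv_mul_cancel₀ (hpos r hr).ne']
  -- `Z * Y * Z = 1`
  have hZYZ : Z * Y * Z = 1 := by
    have e1 : cfc (fun r => f r * r) Y = Z * Y := by
      rw [cfc_mul f (fun r : ℝ => r) Y hfc hidc, cfc_id' ℝ Y]
    have e2 : cfc (fun r => (f r * r) * f r) Y = (Z * Y) * Z := by
      rw [cfc_mul (fun r => f r * r) f Y (hfc.mul hidc) hfc, e1]
    rw [← e2,
      show (1 : Unitization ℂ A) = cfc (fun _ : ℝ => (1 : ℝ)) Y from (cfc_const_one ℝ Y).symm]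
    apply cfc_congr
    intro r hr
    have := hsq_inv r hr
    calc f r * r * f r = f r * f r * r := by ring
      _ = 1 := this
  -- `Z - 1` as a multiple of `Y - 1`
  have hE : Y - 1 = cfc (fun r : ℝ => r - 1) Y := by
    rw [cfc_sub (fun r : ℝ => r) (fun _ => (1 : ℝ)) Y hidc continuousOn_const, cfc_id' ℝ Y,
      cfc_const_one ℝ Y]
  have hZ1 : Z - 1 = cfc (fun r => f r - 1) Y := by
    rw [cfc_sub f (fun _ => (1 : ℝ)) Y hfc continuousOn_const, cfc_const_one ℝ Y]
  have hkey : ∀ r ∈ spectrum ℝ Y, h r * (r - 1) = f r - 1 := by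
    intro r hr
    have hs := Real.mul_self_sqrt (hpos r hr).le
    have hs0 : Real.sqrt r ≠ 0 := hsne r hr
    have hs1 : Real.sqrt r + 1 ≠ 0 := by positivity
    have hr1 : r - 1 = (Real.sqrt r - 1) * (Real.sqrt r + 1) := by
      conv_lhs => rw [← hs]
      ring
    rw [hh_def, hf_def]
    calc -(Real.sqrt r * (Real.sqrt r + 1))⁻¹ * (r - 1)
        = -((Real.sqrt r)⁻¹ * ((Real.sqrt r + 1)⁻¹ * (Real.sqrt r + 1)) * (Real.sqrt r - 1)) := by
          rw [hr1, mul_inv]; ring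
      _ = (Real.sqrt r)⁻¹ * (1 - Real.sqrt r) := by rw [inv_mul_cancel₀ hs1]; ring
      _ = (Real.sqrt r)⁻¹ - 1 := by rw [mul_sub, mul_one, inv_mul_cancel₀ hs0]
  have hZ1left : Z - 1 = cfc h Y * (Y - 1) := by
    rw [hE, ← cfc_mul h (fun r : ℝ => r - 1) Y hhc (hidc.sub continuousOn_const), hZ1]
    exact cfc_congr fun r hr => (hkey r hr).symm
  have hZ1right : Z - 1 = (Y - 1) * cfc h Y := by
    rw [hE, ← cfc_mul (fun r : ℝ => r - 1) h Y (hidc.sub continuousOn_const) hhc, hZ1]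
    exact cfc_congr fun r hr => by rw [mul_comm]; exact (hkey r hr).symm
  -- `Q` absorbs `Z`
  have hQZ1 : Q * (Z - 1) = 0 := by
    rw [hZ1right, ← mul_assoc, hQY, zero_mul]
  have hZ1Q : (Z - 1) * Q = 0 := by
    rw [hZ1left, mul_assoc, hYQ, mul_zero]
  have hQZ : Q * Z = Q := by
    have h' := hQZ1; rw [mul_sub, mul_one, sub_eq_zero] at h'; exact h'
  have hZQ : Z * Q = Q := by
    have h' := hZ1Q; rw [sub_mul, one_mul, sub_eq_zero] at h'; exact h'
  have hTYQ : T = Y - Q := by rw [hY_def, hQ_def]; abel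
  -- the isometry relation
  have hVV : star (X * Z) * (X * Z) = P := by
    have e : star (X * Z) * (X * Z) = Z * T * Z := by
      rw [star_mul, hZsa.star_eq, hT_def]
      noncomm_ring
    rw [e, hTYQ, mul_sub, sub_mul, hZYZ, mul_assoc, hQZ, hZQ, hQ_def]
    abel
  -- `X * Z` lies in `A`
  have hfst : (X * Z).fst = 0 := by
    rw [Unitization.fst_mul, hX_def, Unitization.fst_inr, zero_mul]
  set v : A := (X * Z).snd with hv_def
  have hv : (v : Unitization ℂ A) = X * Z := by
    conv_rhs => rw [← Unitization.inl_fst_add_inr_snd_eq (X * Z)]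
    rw [hfst, Unitization.inl_zero, zero_add]
  refine ⟨v, ?_, ?_, hreal⟩
  · -- `star v * v = p`
    apply Unitization.inr_injective (R := ℂ)
    rw [Unitization.inr_mul, Unitization.inr_star, hv, hVV, hP_def]
  · -- the norm estimate
    have e1 : cfc (fun r => (f r - 1) * r) Y = (Z - 1) * Y := by
      rw [cfc_mul (fun r => f r - 1) (fun r : ℝ => r) Y hf1c hidc, ← hZ1, cfc_id' ℝ Y]
    have hG : (Z - 1) * Y * (Z - 1) = cfc (fun r => (f r - 1) * r * (f r - 1)) Y := by
      rw [cfc_mul (fun r => (f r - 1) * r) (fun r => f r - 1) Y (hf1c.mul hidc) hf1c, e1, ← hZ1]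
    have hGnorm : ‖(Z - 1) * Y * (Z - 1)‖ ≤ (1 - Real.sqrt (1 - d)) * (1 - Real.sqrt (1 - d)) := by
      rw [hG]
      apply norm_cfc_le (mul_nonneg hc0 hc0)
      intro r hr
      obtain ⟨hr1, hr2⟩ := hspec r hr
      have hrpos := hpos r hr
      have hs := Real.mul_self_sqrt hrpos.le
      have hs0 : Real.sqrt r ≠ 0 := hsne r hr
      have habs : |1 - Real.sqrt r| ≤ 1 - Real.sqrt (1 - d) := by
        rcases le_total r 1 with hcase | hcase
        · have h1 : Real.sqrt (1 - d) ≤ Real.sqrt r := Real.sqrt_le_sqrt hr1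
          have h2 : Real.sqrt r ≤ 1 := by
            simpa using Real.sqrt_le_sqrt hcase
          rw [abs_of_nonneg (by linarith)]
          linarith
        · have h1 : (1 : ℝ) ≤ Real.sqrt r := by
            simpa using Real.sqrt_le_sqrt hcase
          have h2 : Real.sqrt r ≤ Real.sqrt (1 + d) := Real.sqrt_le_sqrt hr2
          have h3 : Real.sqrt (1 + d) + Real.sqrt (1 - d) ≤ 2 := by
            nlinarith [Real.mul_self_sqrt (show (0 : ℝ) ≤ 1 + d by linarith),
              Real.sqrt_nonneg (1 + d), Real.sqrt_nonneg (1 - d), hsq,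
              sq_nonneg (Real.sqrt (1 + d) - Real.sqrt (1 - d)),
              sq_nonneg (Real.sqrt (1 + d) + Real.sqrt (1 - d) - 2)]
          rw [abs_of_nonpos (by linarith)]
          linarith
      have hval : (f r - 1) * r * (f r - 1) = (1 - Real.sqrt r) * (1 - Real.sqrt r) := by
        have h1 : f r - 1 = (Real.sqrt r)⁻¹ * (1 - Real.sqrt r) := by
          rw [hf_def, mul_sub, mul_one, inv_mul_cancel₀ hs0]
        have h2 : (Real.sqrt r)⁻¹ * (Real.sqrt r)⁻¹ * r = 1 := by
          rw [← mul_inv, hs, inv_mul_cancel₀ hrpos.ne']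
        calc (f r - 1) * r * (f r - 1)
            = ((Real.sqrt r)⁻¹ * (Real.sqrt r)⁻¹ * r)
                * ((1 - Real.sqrt r) * (1 - Real.sqrt r)) := by rw [h1]; ring
          _ = (1 - Real.sqrt r) * (1 - Real.sqrt r) := by rw [h2, one_mul]
      rw [Real.norm_eq_abs, hval, abs_mul]
      exact mul_le_mul habs habs (abs_nonneg _) hc0
    have hZ1sa : star (Z - 1) = Z - 1 := by
      rw [star_sub, hZsa.star_eq, star_one]
    have hstar : star (X * (Z - 1)) * (X * (Z - 1)) = (Z - 1) * Y * (Z - 1) := by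
      have e2 : (Z - 1) * T * (Z - 1) = (Z - 1) * Y * (Z - 1) := by
        have e3 : (Z - 1) * (Y - Q) * (Z - 1)
            = (Z - 1) * Y * (Z - 1) - ((Z - 1) * Q) * (Z - 1) := by noncomm_ring
        rw [hTYQ, e3, hZ1Q, zero_mul, sub_zero]
      rw [star_mul, hZ1sa, ← e2, hT_def]
      noncomm_ring
    have hnx : ‖v - x‖ = ‖X * (Z - 1)‖ := by
      rw [← Unitization.norm_inr (𝕜 := ℂ) (v - x), Unitization.inr_sub, hv, ← hX_def,
        mul_sub, mul_one]
    have hcs : ‖X * (Z - 1)‖ * ‖X * (Z - 1)‖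
        ≤ (1 - Real.sqrt (1 - d)) * (1 - Real.sqrt (1 - d)) := by
      rw [← CStarRing.norm_star_mul_self, hstar]
      exact hGnorm
    have hfinal : ‖X * (Z - 1)‖ ≤ 1 - Real.sqrt (1 - d) := by
      nlinarith [norm_nonneg (X * (Z - 1))]
    rw [hnx]
    exact hfinal
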